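/- Let 1 < p < k̄ and let f'_p be the extended distribution rule (equal to f*_p on [1,p] and defined by the recursion j·f'_p(j) - f'_p(j+1) = χ(f'_p,k̄) for p ≤ j ≤ k̄-1 with (k̄-1)·f'_p(k̄) = χ(f'_p,k̄)). Then j·f'_p(j) ≤ 1 for all j ∈ {1,...,k̄}. -/

import Mathlib

/-- The optimal distribution rule `f*_k(j)` for covering games of cardinality `k`. -/
noncomputable def fstar (k j : ℕ) : ℝ :=
  (Nat.factorial (j - 1) : ℝ) *
    (1 / (((k - 1) * Nat.factorial (k - 1) : ℕ) : ℝ) +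
      ∑ i ∈ Finset.Icc j (k - 1), (1 : ℝ) / (Nat.factorial i : ℝ)) /
  (1 / (((k - 1) * Nat.factorial (k - 1) : ℕ) : ℝ) +
      ∑ i ∈ Finset.Icc 1 (k - 1), (1 : ℝ) / (Nat.factorial i : ℝ))

/-- `χ(f'_p, k̄)` in closed form. -/
noncomputable def chiRisky (p k : ℕ) : ℝ :=
  ((((k - 1) * Nat.factorial (k - 1) : ℕ) : ℝ) /
      ((k : ℝ) + ((k - 1 : ℕ) : ℝ) *
        ∑ h ∈ Finset.Icc 1 (k - 1 - p),
          (Nat.factorial (k - 1) : ℝ) / (Nat.factorial (k - h - 1) : ℝ))) *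
    (fstar p p / (Nat.factorial (p - 1) : ℝ))

/-- Key downward-induction lemma: `j · j! · (A + Σ_{i=j+1}^q 1/i!) ≤ 1` for `1 ≤ j ≤ q`,
where `A = 1/(q·q!)`. -/
lemma aux_L (q : ℕ) (A : ℝ) (hA : A = 1 / ((q * Nat.factorial q : ℕ) : ℝ)) :
    ∀ j, 1 ≤ j → j ≤ q →
      (j : ℝ) * (Nat.factorial j : ℝ) *
        (A + ∑ i ∈ Finset.Icc (j + 1) q, (1 : ℝ) / (Nat.factorial i : ℝ)) ≤ 1 := by
  have key : ∀ d j, q - j = d → 1 ≤ j → j ≤ q →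
      (j : ℝ) * (Nat.factorial j : ℝ) *
        (A + ∑ i ∈ Finset.Icc (j + 1) q, (1 : ℝ) / (Nat.factorial i : ℝ)) ≤ 1 := by
    intro d
    induction d with
    | zero =>
      intro j hd hj1 hj2
      have hjq : j = q := by omega
      subst hjq
      rw [Finset.Icc_eq_empty (by omega)]
      simp only [Finset.sum_empty, add_zero]
      have hpos : (0 : ℝ) < ((j * Nat.factorial j : ℕ) : ℝ) := by
        have : 0 < j * Nat.factorial j := Nat.mul_pos (by omega) (Nat.factorial_pos j)
        exact_mod_cast this
      rw [hA, mul_one_div, div_le_one hpos]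
      push_cast
      exact le_of_eq (by ring)
    | succ d ih =>
      intro j hd hj1 hj2
      have hjq : j < q := by omega
      have ihj := ih (j + 1) (by omega) (by omega) (by omega)
      have hsplit : ∑ i ∈ Finset.Icc (j + 1) q, (1 : ℝ) / (Nat.factorial i : ℝ)
          = (1 : ℝ) / (Nat.factorial (j + 1) : ℝ)
            + ∑ i ∈ Finset.Icc (j + 2) q, (1 : ℝ) / (Nat.factorial i : ℝ) := by
        rw [← Finset.Ioc_insert_left (by omega : j + 1 ≤ q),
          Finset.sum_insert (by simp), ← Finset.Icc_add_one_left_eq_Ioc]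
        rfl
      rw [hsplit]
      set S := ∑ i ∈ Finset.Icc (j + 2) q, (1 : ℝ) / (Nat.factorial i : ℝ) with hS
      have hSnn : 0 ≤ S := by positivity
      have hAnn : 0 ≤ A := by rw [hA]; positivity
      have hfac : ((Nat.factorial (j + 1) : ℕ) : ℝ)
          = ((j : ℝ) + 1) * (Nat.factorial j : ℝ) := by
        rw [Nat.factorial_succ]; push_cast; ring
      have hfpos : (0 : ℝ) < (Nat.factorial j : ℝ) := by positivity
      set F := (Nat.factorial j : ℝ) with hF
      set u := (j : ℝ) with hu'
      have hj1pos : (0 : ℝ) < u + 1 := by rw [hu']; positivity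
      have hu : (1 : ℝ) ≤ u := by rw [hu']; exact_mod_cast hj1
      rw [hfac] at ihj ⊢
      have ihj' : (u + 1) * ((u + 1) * F) * (A + S) ≤ 1 := by
        have hc : ((j + 1 : ℕ) : ℝ) = u + 1 := by rw [hu']; push_cast; ring
        rw [hc] at ihj
        exact ihj
      have hx : 0 ≤ A + S := by linarith
      have hdiv : u * F * (1 / ((u + 1) * F)) = u / (u + 1) := by
        field_simp
      have expand : u * F * (A + (1 / ((u + 1) * F) + S))
          = u * F * (A + S) + u * F * (1 / ((u + 1) * F)) := by ring
      rw [expand, hdiv]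
      have htarget : u * F * (A + S) ≤ 1 / (u + 1) := by
        rw [le_div_iff₀ hj1pos]
        nlinarith [ihj', mul_nonneg (mul_nonneg hfpos.le hx) hj1pos.le]
      have hone : 1 / (u + 1) + u / (u + 1) = 1 := by
        rw [← add_div, add_comm, div_self hj1pos.ne']
      linarith
  intro j hj1 hj2
  exact key (q - j) j rfl hj1 hj2

/-- Upward monotonicity: `j! · (A + Σ_{i=j}^q 1/i!)` is at most its value at `j = 1`. -/
lemma aux_M (q : ℕ) (A : ℝ) (hA : A = 1 / ((q * Nat.factorial q : ℕ) : ℝ)) :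
    ∀ j, 1 ≤ j → j ≤ q + 1 →
      (Nat.factorial j : ℝ) * (A + ∑ i ∈ Finset.Icc j q, (1 : ℝ) / (Nat.factorial i : ℝ))
        ≤ A + ∑ i ∈ Finset.Icc 1 q, (1 : ℝ) / (Nat.factorial i : ℝ) := by
  intro j hj1 hj2
  induction j, hj1 using Nat.le_induction with
  | base => simp [Nat.factorial_one]
  | succ j hj ih =>
    have hjq : j ≤ q := by omega
    have ih' := ih (by omega)
    have hsplit : ∑ i ∈ Finset.Icc j q, (1 : ℝ) / (Nat.factorial i : ℝ)
        = (1 : ℝ) / (Nat.factorial j : ℝ)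
          + ∑ i ∈ Finset.Icc (j + 1) q, (1 : ℝ) / (Nat.factorial i : ℝ) := by
      rw [← Finset.Ioc_insert_left (by omega : j ≤ q),
        Finset.sum_insert (by simp), ← Finset.Icc_add_one_left_eq_Ioc]
    have hL := aux_L q A hA j hj hjq
    have hfac : ((Nat.factorial (j + 1) : ℕ) : ℝ)
        = ((j : ℝ) + 1) * (Nat.factorial j : ℝ) := by
      rw [Nat.factorial_succ]; push_cast; ring
    have hfpos : (0 : ℝ) < (Nat.factorial j : ℝ) := by positivity
    have hstep : ((Nat.factorial (j + 1) : ℕ) : ℝ) *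
        (A + ∑ i ∈ Finset.Icc (j + 1) q, (1 : ℝ) / (Nat.factorial i : ℝ))
        ≤ (Nat.factorial j : ℝ) *
          (A + ∑ i ∈ Finset.Icc j q, (1 : ℝ) / (Nat.factorial i : ℝ)) := by
      rw [hsplit, hfac]
      have hdiv : (Nat.factorial j : ℝ) * (1 / (Nat.factorial j : ℝ)) = 1 := by
        field_simp
      nlinarith [hL, hdiv]
    calc ((Nat.factorial (j + 1) : ℕ) : ℝ) *
        (A + ∑ i ∈ Finset.Icc (j + 1) q, (1 : ℝ) / (Nat.factorial i : ℝ))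
        ≤ _ := hstep
      _ ≤ _ := ih'

/-- The head bound: `j · f*_p(j) ≤ 1` for `1 ≤ j ≤ p`. -/
lemma aux_head (p : ℕ) (hp : 1 < p) :
    ∀ j, 1 ≤ j → j ≤ p → (j : ℝ) * fstar p j ≤ 1 := by
  intro j hj1 hj2
  set q := p - 1 with hq
  have hq1 : 1 ≤ q := by omega
  have hpq : p - 1 = q := rfl
  set A : ℝ := 1 / ((q * Nat.factorial q : ℕ) : ℝ) with hA
  have hApos : 0 < A := by
    rw [hA]
    have : 0 < q * Nat.factorial q := Nat.mul_pos (by omega) (Nat.factorial_pos q)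
    positivity
  have hD : (0 : ℝ) < A + ∑ i ∈ Finset.Icc 1 q, (1 : ℝ) / (Nat.factorial i : ℝ) := by
    have : (0:ℝ) ≤ ∑ i ∈ Finset.Icc 1 q, (1 : ℝ) / (Nat.factorial i : ℝ) := by positivity
    linarith
  have hM := aux_M q A hA j hj1 (by omega)
  unfold fstar
  rw [hpq, ← hA]
  rw [show (j : ℝ) * ((Nat.factorial (j - 1) : ℝ) *
        (A + ∑ i ∈ Finset.Icc j q, (1 : ℝ) / (Nat.factorial i : ℝ)) /
        (A + ∑ i ∈ Finset.Icc 1 q, (1 : ℝ) / (Nat.factorial i : ℝ)))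
      = ((j : ℝ) * ((Nat.factorial (j - 1) : ℝ) *
        (A + ∑ i ∈ Finset.Icc j q, (1 : ℝ) / (Nat.factorial i : ℝ)))) /
        (A + ∑ i ∈ Finset.Icc 1 q, (1 : ℝ) / (Nat.factorial i : ℝ)) from by ring]
  rw [div_le_one hD]
  have hfacj : (j : ℝ) * (Nat.factorial (j - 1) : ℝ) = (Nat.factorial j : ℝ) := by
    have : j = (j - 1) + 1 := by omega
    rw [this, Nat.factorial_succ]
    push_cast
    ring_nf
  calc (j : ℝ) * ((Nat.factorial (j - 1) : ℝ) *
        (A + ∑ i ∈ Finset.Icc j q, (1 : ℝ) / (Nat.factorial i : ℝ)))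
      = (Nat.factorial j : ℝ) *
        (A + ∑ i ∈ Finset.Icc j q, (1 : ℝ) / (Nat.factorial i : ℝ)) := by
        rw [← hfacj]; ring
    _ ≤ _ := hM

lemma aux_chi_nonneg (p k : ℕ) : 0 ≤ chiRisky p k := by
  unfold chiRisky fstar
  have h1 : (0:ℝ) ≤ (((k - 1) * Nat.factorial (k - 1) : ℕ) : ℝ) := by positivity
  have h2 : (0:ℝ) ≤ (k : ℝ) + ((k - 1 : ℕ) : ℝ) *
      ∑ h ∈ Finset.Icc 1 (k - 1 - p),
        (Nat.factorial (k - 1) : ℝ) / (Nat.factorial (k - h - 1) : ℝ) := by positivity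
  have h3 : (0:ℝ) ≤ (Nat.factorial (p - 1) : ℝ) *
      (1 / (((p - 1) * Nat.factorial (p - 1) : ℕ) : ℝ) +
        ∑ i ∈ Finset.Icc p (p - 1), (1 : ℝ) / (Nat.factorial i : ℝ)) /
      (1 / (((p - 1) * Nat.factorial (p - 1) : ℕ) : ℝ) +
        ∑ i ∈ Finset.Icc 1 (p - 1), (1 : ℝ) / (Nat.factorial i : ℝ)) := by positivity
  have h4 : (0:ℝ) ≤ (Nat.factorial (p - 1) : ℝ) := by positivity
  exact mul_nonneg (div_nonneg h1 h2) (div_nonneg h3 h4)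

theorem stmt_15 (p k : ℕ) (hp : 1 < p) (hpk : p < k) (f : ℕ → ℝ)
    (hhead : ∀ j ∈ Finset.Icc 1 p, f j = fstar p j)
    (hrec : ∀ j : ℕ, p ≤ j → j ≤ k - 1 → (j : ℝ) * f j - f (j + 1) = chiRisky p k)
    (htail : ((k - 1 : ℕ) : ℝ) * f k = chiRisky p k) :
    ∀ j ∈ Finset.Icc 1 k, (j : ℝ) * f j ≤ 1 := by
  set χ := chiRisky p k with hχdef
  have hχ : 0 ≤ χ := aux_chi_nonneg p k
  have hk2 : 2 < k := by omega
  have hkcast : ((k - 1 : ℕ) : ℝ) = (k : ℝ) - 1 := by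
    push_cast [Nat.cast_sub (by omega : 1 ≤ k)]; ring
  -- Claim B: for p+1 ≤ j ≤ k, f j ≥ 0 and (j-1)·f j ≤ χ.
  have claimB : ∀ j, p + 1 ≤ j → j ≤ k → 0 ≤ f j ∧ ((j : ℝ) - 1) * f j ≤ χ := by
    have key : ∀ d j, k - j = d → p + 1 ≤ j → j ≤ k →
        0 ≤ f j ∧ ((j : ℝ) - 1) * f j ≤ χ := by
      intro d
      induction d with
      | zero =>
        intro j hd hj1 hj2
        have hjk : j = k := by omega
        subst hjk
        rw [hkcast] at htail
        constructor
        · have hkpos : (0:ℝ) < (j : ℝ) - 1 := by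
            have : (2:ℝ) < (j:ℝ) := by exact_mod_cast hk2
            linarith
          nlinarith [htail, hχ]
        · rw [htail]
      | succ d ih =>
        intro j hd hj1 hj2
        have hjk : j < k := by omega
        obtain ⟨ih0, ih1⟩ := ih (j + 1) (by omega) (by omega) (by omega)
        have hr := hrec j (by omega) (by omega)
        have hjpos : (0:ℝ) < (j : ℝ) := by
          have : 0 < j := by omega
          exact_mod_cast this
        have hfj : (j : ℝ) * f j = χ + f (j + 1) := by linarith
        have hjcast : ((j + 1 : ℕ) : ℝ) - 1 = (j : ℝ) := by push_cast; ring
        rw [hjcast] at ih1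
        constructor
        · nlinarith [hfj, hχ, ih0]
        · -- need (j-1) f j ≤ χ, i.e. (j-1)(χ + f(j+1)) ≤ j χ, i.e. (j-1) f(j+1) ≤ χ
          have hj2' : (2:ℝ) ≤ (j:ℝ) := by
            have : 2 ≤ j := by omega
            exact_mod_cast this
          nlinarith [hfj, ih0, ih1, hχ]
    intro j hj1 hj2
    exact key (k - j) j rfl hj1 hj2
  -- Claim D: f is decreasing on [p+1, k], so f j ≤ f (p+1) there.
  have claimD : ∀ j, p + 1 ≤ j → j ≤ k → f j ≤ f (p + 1) := by
    intro j hj1 hj2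
    induction j, hj1 using Nat.le_induction with
    | base => exact le_rfl
    | succ j hj ihj =>
      have hjk : j ≤ k - 1 := by omega
      have hr := hrec j (by omega) hjk
      have hfj : (j : ℝ) * f j = χ + f (j + 1) := by linarith
      obtain ⟨hB0, hB1⟩ := claimB (j + 1) (by omega) (by omega)
      have hjcast : ((j + 1 : ℕ) : ℝ) - 1 = (j : ℝ) := by push_cast; ring
      rw [hjcast] at hB1
      have hjpos : (0:ℝ) < (j : ℝ) := by
        have : 0 < j := by omega
        exact_mod_cast this
      have hstep : f (j + 1) ≤ f j := by
        -- j f j = χ + f(j+1) ≥ j f(j+1) since (j-1) f(j+1) ≤ j f(j+1) ≤ χ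
        nlinarith [hfj, hB0, hB1]
      exact hstep.trans (ihj (by omega))
  -- head value bound
  have hfp : f p = fstar p p := hhead p (by simp [Finset.mem_Icc]; omega)
  have hppos : (0:ℝ) < (p : ℝ) := by
    have : 0 < p := by omega
    exact_mod_cast this
  have hpfp : (p : ℝ) * f p ≤ 1 := by
    rw [hfp]
    exact aux_head p hp p (by omega) le_rfl
  have hrp := hrec p le_rfl (by omega)
  have hfp1 : χ + f (p + 1) = (p : ℝ) * f p := by linarith
  -- main conclusion
  intro j hj
  rw [Finset.mem_Icc] at hj
  obtain ⟨hj1, hj2⟩ := hj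
  by_cases hjp : j ≤ p
  · rw [hhead j (by rw [Finset.mem_Icc]; exact ⟨hj1, hjp⟩)]
    exact aux_head p hp j hj1 hjp
  · push_neg at hjp
    by_cases hjk : j = k
    · subst hjk
      rw [hkcast] at htail
      have hfk : (j : ℝ) * f j = χ + f j := by linarith
      have hD := claimD j (by omega) le_rfl
      linarith [hfk, hD, hfp1, hpfp]
    · have hjk' : j ≤ k - 1 := by omega
      have hr := hrec j (by omega) hjk'
      have hfj : (j : ℝ) * f j = χ + f (j + 1) := by linarith
      have hD := claimD (j + 1) (by omega) (by omega)
      linarith [hfj, hD, hfp1, hpfp]
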